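/- Let c = (√12 + √(2π√3))/2. For all integers n₁, n₂ ≥ 2 with n = n₁ + n₂ − 1, one has 3/c + √(n − 1/4) ≤ √(n₁ − 1/4) + √(n₂ − 1/4). -/

import Mathlib

/-- Key concavity lemma: √(a+t) + √b ≤ √(b+t) + √a for 0 ≤ b ≤ a, 0 ≤ t. -/
lemma sqrt_concave_key (a b t : ℝ) (hb : 0 ≤ b) (hba : b ≤ a) (ht : 0 ≤ t) :
    Real.sqrt (a + t) + Real.sqrt b ≤ Real.sqrt (b + t) + Real.sqrt a := by
  have ha : 0 ≤ a := le_trans hb hba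
  have h1 : Real.sqrt ((a + t) * b) ≤ Real.sqrt ((b + t) * a) := by
    apply Real.sqrt_le_sqrt; nlinarith
  rw [Real.sqrt_mul (by linarith), Real.sqrt_mul (by linarith)] at h1
  have s1 := Real.sq_sqrt (show (0:ℝ) ≤ a + t by linarith)
  have s2 := Real.sq_sqrt hb
  have s3 := Real.sq_sqrt (show (0:ℝ) ≤ b + t by linarith)
  have s4 := Real.sq_sqrt ha
  have n1 := Real.sqrt_nonneg (a + t)
  have n2 := Real.sqrt_nonneg b
  have n3 := Real.sqrt_nonneg (b + t)
  have n4 := Real.sqrt_nonneg a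
  nlinarith [sq_nonneg (Real.sqrt (a+t) + Real.sqrt b - Real.sqrt (b+t) - Real.sqrt a),
    sq_nonneg (Real.sqrt (a+t) + Real.sqrt b + Real.sqrt (b+t) + Real.sqrt a)]

theorem sqrt_quarter_ineq (n₁ n₂ n : ℤ) (h₁ : 2 ≤ n₁) (h₂ : 2 ≤ n₂)
    (hn : n = n₁ + n₂ - 1) :
    3 / ((Real.sqrt 12 + Real.sqrt (2 * Real.pi * Real.sqrt 3)) / 2) +
      Real.sqrt ((n : ℝ) - 1 / 4) ≤
    Real.sqrt ((n₁ : ℝ) - 1 / 4) + Real.sqrt ((n₂ : ℝ) - 1 / 4) := by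
  set x := (n₁ : ℝ) with hxdef
  set y := (n₂ : ℝ) with hydef
  have hx : (2:ℝ) ≤ x := by rw [hxdef]; exact_mod_cast h₁
  have hy : (2:ℝ) ≤ y := by rw [hydef]; exact_mod_cast h₂
  have hncast : (n : ℝ) = x + y - 1 := by rw [hn]; push_cast; ring
  -- step A
  have hA := sqrt_concave_key (x - 1/4) (7/4) (y - 1) (by norm_num) (by linarith) (by linarith)
  have hA' : Real.sqrt (x + y - 5/4) + Real.sqrt (7/4) ≤
      Real.sqrt (y + 3/4) + Real.sqrt (x - 1/4) := by
    have e1 : x - 1/4 + (y - 1) = x + y - 5/4 := by ring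
    have e2 : (7:ℝ)/4 + (y - 1) = y + 3/4 := by ring
    rwa [e1, e2] at hA
  -- step B
  have hB := sqrt_concave_key (y - 1/4) (7/4) 1 (by norm_num) (by linarith) (by norm_num)
  have hB' : Real.sqrt (y + 3/4) + Real.sqrt (7/4) ≤
      Real.sqrt (11/4) + Real.sqrt (y - 1/4) := by
    have e1 : y - 1/4 + 1 = y + 3/4 := by ring
    have e2 : (7:ℝ)/4 + 1 = 11/4 := by ring
    rwa [e1, e2] at hB
  -- numeric bounds
  have h3 : (1.73:ℝ) ≤ Real.sqrt 3 := by
    rw [show (3:ℝ) = 1.73^2 + 0.0071 by norm_num]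
    nlinarith [Real.sq_sqrt (show (0:ℝ) ≤ 1.73^2 + 0.0071 by norm_num),
      Real.sqrt_nonneg (1.73^2 + 0.0071)]
  have hpi : (3.14:ℝ) ≤ Real.pi := le_of_lt Real.pi_gt_d2
  have h12 : (3.46:ℝ) ≤ Real.sqrt 12 := by
    have : (3.46:ℝ) = Real.sqrt (3.46^2) := by
      rw [Real.sqrt_sq]; norm_num
    rw [this]; apply Real.sqrt_le_sqrt; norm_num
  have h2pi : (3.29:ℝ) ≤ Real.sqrt (2 * Real.pi * Real.sqrt 3) := by
    have h : (3.29:ℝ)^2 ≤ 2 * Real.pi * Real.sqrt 3 := by nlinarith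
    calc (3.29:ℝ) = Real.sqrt (3.29^2) := by rw [Real.sqrt_sq]; norm_num
    _ ≤ _ := Real.sqrt_le_sqrt h
  have h7 : (1.32:ℝ) ≤ Real.sqrt (7/4) := by
    calc (1.32:ℝ) = Real.sqrt (1.32^2) := by rw [Real.sqrt_sq]; norm_num
    _ ≤ _ := Real.sqrt_le_sqrt (by norm_num)
  have h11 : Real.sqrt (11/4) ≤ 1.66 := by
    rw [show (1.66:ℝ) = Real.sqrt (1.66^2) by rw [Real.sqrt_sq]; norm_num]
    apply Real.sqrt_le_sqrt; norm_num
  set c := (Real.sqrt 12 + Real.sqrt (2 * Real.pi * Real.sqrt 3)) / 2 with hcdef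
  have hc : (3.3:ℝ) ≤ c := by rw [hcdef]; linarith
  have hc0 : (0:ℝ) < c := by linarith
  have hC : 3 / c + Real.sqrt (11/4) ≤ 2 * Real.sqrt (7/4) := by
    have hdiv : 3 / c ≤ 3 / 3.3 := by
      apply div_le_div_of_nonneg_left (by norm_num) (by norm_num) hc
    have : (3:ℝ)/3.3 + 1.66 ≤ 2 * 1.32 := by norm_num
    linarith
  have egoal : (n : ℝ) - 1/4 = x + y - 5/4 := by rw [hncast]; ring
  rw [egoal]
  linarith
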